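/- arXiv:2104.08329 — 2 statements merged into one kernel-verified Lean document; each statement's English description precedes it below -/
import Mathlib

section
/- Let $V:[t_0,t_1)\to\mathbb{R}_{\ge 0}$ be continuously differentiable with $\dot V(t)\le 2aV(t)+b\sqrt{2V(t)}$ for all $t$, where $a,b>0$, and $V(t_0)=0$. Then $V(t)\le \Big(\frac{b}{a}\frac{\sqrt2}{2}\big(e^{a(t-t_0)}-1\big)\Big)^2$ for all $t\in[t_0,t_1)$. -/
open Real Set

/-- Equation (16) of the paper: the Bernoulli-type differential inequality
`V̇ ≤ 2aV + b√(2V)` with `V(t₀)=0` is bounded by the solution of the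
corresponding ODE. -/
theorem bernoulli_comparison_bound
    (a b : ℝ) (ha : 0 < a) (hb : 0 < b)
    (t0 t1 : ℝ) (V : ℝ → ℝ)
    (hVnonneg : ∀ t ∈ Ico t0 t1, 0 ≤ V t)
    (hV : ∀ t ∈ Ico t0 t1,
      HasDerivAt V (deriv V t) t ∧ deriv V t ≤ 2 * a * V t + b * Real.sqrt (2 * V t))
    (hV0 : V t0 = 0) :
    ∀ t ∈ Ico t0 t1,
      V t ≤ (b / a * (Real.sqrt 2 / 2) * (Real.exp (a * (t - t0)) - 1)) ^ 2 := by
  intro t ht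
  obtain ⟨ht0, ht1⟩ := ht
  set E : ℝ := Real.exp (a * (t - t0)) with hE
  have hE1 : 1 ≤ E := by
    rw [hE]
    have : (0:ℝ) ≤ a * (t - t0) := mul_nonneg ha.le (by linarith)
    calc (1:ℝ) = Real.exp 0 := (Real.exp_zero).symm
    _ ≤ E := Real.exp_le_exp.mpr this
  have hEpos : 0 < E := lt_of_lt_of_le one_pos hE1
  -- key claim: √(2 V t) ≤ b/a * (E - 1)
  have key : Real.sqrt (2 * V t) ≤ b / a * (E - 1) := by
    apply le_of_forall_pos_le_add
    intro ε hε
    set δ : ℝ := (ε / E) ^ 2 with hδdef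
    have hδpos : 0 < δ := by positivity
    set g : ℝ → ℝ := fun x => Real.sqrt (2 * V x + δ) with hg
    -- Icc t0 t ⊆ Ico t0 t1
    have hsub : Icc t0 t ⊆ Ico t0 t1 := fun x hx => ⟨hx.1, lt_of_le_of_lt hx.2 ht1⟩
    have hsub' : Ico t0 t ⊆ Ico t0 t1 := fun x hx => ⟨hx.1, lt_trans hx.2 ht1⟩
    have hVcont : ContinuousOn V (Icc t0 t) := fun x hx =>
      ((hV x (hsub hx)).1.continuousAt).continuousWithinAt
    have hgcont : ContinuousOn g (Icc t0 t) := by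
      apply Real.continuous_sqrt.comp_continuousOn
      exact (continuousOn_const.mul hVcont).add continuousOn_const
    -- derivative of g on Ico t0 t
    have hgderiv : ∀ x ∈ Ico t0 t,
        HasDerivAt g (deriv V x / Real.sqrt (2 * V x + δ)) x := by
      intro x hx
      have hpos : 0 < 2 * V x + δ := by
        have := hVnonneg x (hsub' hx); linarith
      have h1 : HasDerivAt (fun y => 2 * V y + δ) (2 * deriv V x) x :=
        ((hV x (hsub' hx)).1.const_mul 2).add_const δ
      have h2 := (Real.hasDerivAt_sqrt (ne_of_gt hpos)).comp x h1
      refine h2.congr_deriv ?_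
      have hs0 : Real.sqrt (2 * V x + δ) ≠ 0 := ne_of_gt (Real.sqrt_pos.mpr hpos)
      field_simp
    -- bound on deriv of g
    have hbound : ∀ x ∈ Ico t0 t,
        deriv V x / Real.sqrt (2 * V x + δ) ≤ a * g x + b := by
      intro x hx
      have hVx := hVnonneg x (hsub' hx)
      have hpos : 0 < 2 * V x + δ := by linarith
      have hs : 0 < Real.sqrt (2 * V x + δ) := Real.sqrt_pos.mpr hpos
      have hVd := (hV x (hsub' hx)).2
      have h2V : 2 * V x ≤ (Real.sqrt (2 * V x + δ))^2 := by
        rw [Real.sq_sqrt hpos.le]; linarith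
      have hsq : Real.sqrt (2 * V x) ≤ Real.sqrt (2 * V x + δ) :=
        Real.sqrt_le_sqrt (by linarith)
      calc deriv V x / Real.sqrt (2 * V x + δ)
          ≤ (2 * a * V x + b * Real.sqrt (2 * V x)) / Real.sqrt (2 * V x + δ) := by
            exact div_le_div_of_nonneg_right hVd hs.le
        _ ≤ a * Real.sqrt (2 * V x + δ) + b := by
            rw [div_le_iff₀ hs]
            have h1 : 2 * a * V x ≤ a * Real.sqrt (2 * V x + δ) * Real.sqrt (2 * V x + δ) := by
              have := mul_le_mul_of_nonneg_left h2V ha.le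
              nlinarith [Real.sq_sqrt hpos.le]
            have h2 : b * Real.sqrt (2 * V x) ≤ b * Real.sqrt (2 * V x + δ) :=
              mul_le_mul_of_nonneg_left hsq hb.le
            nlinarith
        _ = a * g x + b := rfl
    have hg0 : g t0 ≤ Real.sqrt δ := by
      simp [hg, hV0]
    have := le_gronwallBound_of_liminf_deriv_right_le hgcont
      (fun x hx r hr =>
        ((hgderiv x hx).hasDerivWithinAt (s := Ici x)).liminf_right_slope_le hr)
      hg0 hbound t ⟨ht0, le_refl t⟩
    rw [gronwallBound_of_K_ne_0 (ne_of_gt ha)] at this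
    have hsqδ : Real.sqrt δ = ε / E := by
      rw [hδdef, Real.sqrt_sq (by positivity)]
    have hgt : Real.sqrt (2 * V t) ≤ g t := Real.sqrt_le_sqrt (by linarith)
    calc Real.sqrt (2 * V t) ≤ g t := hgt
      _ ≤ Real.sqrt δ * Real.exp (a * (t - t0)) + b / a * (Real.exp (a * (t - t0)) - 1) := this
      _ = ε + b / a * (E - 1) := by rw [hsqδ, ← hE]; field_simp
      _ = b / a * (E - 1) + ε := by ring
  -- conclude
  have hVt := hVnonneg t ⟨ht0, ht1⟩
  have h2 : 2 * V t ≤ (b / a * (E - 1)) ^ 2 := by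
    have := Real.sqrt_le_sqrt (le_refl (2 * V t))
    have h := pow_le_pow_left₀ (Real.sqrt_nonneg _) key 2
    rwa [Real.sq_sqrt (by linarith)] at h
  have : (b / a * (Real.sqrt 2 / 2) * (E - 1)) ^ 2 = (b / a * (E - 1))^2 / 2 := by
    rw [mul_pow, mul_pow, div_pow, div_pow, Real.sq_sqrt (by norm_num : (0:ℝ) ≤ 2)]
    ring
  rw [this]
  linarith
end

section
/- Let $g:\mathbb{R}_{\ge0}\to\mathbb{R}^m$ be continuous, and let $0=t_0<t_1<t_2<\cdots$ with $t_s\to\infty$. Suppose for each $s$, $e:[t_s,t_{s+1})\to\mathbb{R}^m$ is defined by $e(t)=\int_{t_s}^t \big(Ae(\tau)+g(\tau)\big)\,d\tau$ (i.e., $e$ solves $\dot e = Ae+g$ with reset $e(t_s)=0$ at each $t_s$), $\|g(\tau)\|\le\kappa$ for all $\tau$, and $\sup_s (t_{s+1}-t_s) \le \frac{1}{S_{\max}(A)}\ln\big(\frac{V_T S_{\max}(A)}{\kappa}+1\big)$ for some $V_T>0$. Then $\|e(t)\|\le V_T$ for all $t\ge 0$. -/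
open Real Set intervalIntegral MeasureTheory

lemma interval_gronwall {m : ℕ}
    (A : EuclideanSpace ℝ (Fin m) →L[ℝ] EuclideanSpace ℝ (Fin m))
    (Smax : ℝ) (hSmax : 0 < Smax) (hA : ∀ v, ‖A v‖ ≤ Smax * ‖v‖)
    (g : ℝ → EuclideanSpace ℝ (Fin m)) (hgcont : Continuous g)
    (κ : ℝ) (hκ : 0 < κ) (hg : ∀ τ, ‖g τ‖ ≤ κ)
    (e : ℝ → EuclideanSpace ℝ (Fin m)) {a b : ℝ} (hab : a < b)
    (he : ∀ u ∈ Ico a b, e u = ∫ τ in a..u, (A (e τ) + g τ)) :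
    ∀ u ∈ Ico a b, ‖e u‖ ≤ κ / Smax * (Real.exp (Smax * (u - a)) - 1) := by
  set f : ℝ → EuclideanSpace ℝ (Fin m) := fun τ => A (e τ) + g τ with hf
  -- continuity of e on [a,v] given integrability
  have hcont : ∀ v ∈ Ico a b, IntervalIntegrable f volume a v →
      ContinuousOn e (Icc a v) := by
    intro v hv hint
    have hav : a ≤ v := hv.1
    have hF : ContinuousOn (fun u => ∫ τ in a..u, f τ) (Icc a v) := by
      have := continuousOn_primitive_interval' hint left_mem_uIcc
      rwa [uIcc_of_le hav] at this
    refine hF.congr fun u hu => ?_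
    exact he u ⟨hu.1, lt_of_le_of_lt hu.2 hv.2⟩
  -- Grönwall bound given integrability
  have step1 : ∀ v ∈ Ico a b, IntervalIntegrable f volume a v →
      ∀ u ∈ Icc a v, ‖e u‖ ≤ κ / Smax * (Real.exp (Smax * (u - a)) - 1) := by
    intro v hv hint
    have hav : a ≤ v := hv.1
    have hecont : ContinuousOn e (Icc a v) := hcont v hv hint
    have hfcont : ContinuousOn f (Icc a v) :=
      (A.continuous.comp_continuousOn hecont).add hgcont.continuousOn
    have hderiv : ∀ x ∈ Ico a v, HasDerivWithinAt e (f x) (Ici x) x := by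
      intro x hx
      have h1 : IntervalIntegrable f volume a x :=
        hint.mono_set (by rw [uIcc_of_le hx.1, uIcc_of_le hav]
                          exact Icc_subset_Icc le_rfl hx.2.le)
      have hmem : Icc x v ∈ nhdsWithin x (Ici x) := Icc_mem_nhdsGE_of_mem ⟨le_rfl, hx.2⟩
      have hmeas : StronglyMeasurableAtFilter f (nhdsWithin x (Ici x)) volume :=
        ⟨Icc x v, hmem,
          ((hfcont.mono (Icc_subset_Icc hx.1 le_rfl)).aestronglyMeasurable measurableSet_Icc)⟩
      have hmem' : Icc x v ∈ nhdsWithin x (Ioi x) :=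
        nhdsWithin_mono x Ioi_subset_Ici_self hmem
      have hmeas' : StronglyMeasurableAtFilter f (nhdsWithin x (Ioi x)) volume :=
        ⟨Icc x v, hmem',
          ((hfcont.mono (Icc_subset_Icc hx.1 le_rfl)).aestronglyMeasurable measurableSet_Icc)⟩
      have hcw : ContinuousWithinAt f (Ioi x) x :=
        ((hfcont x ⟨hx.1, hx.2.le⟩).mono_of_mem_nhdsWithin
          (Filter.mem_of_superset hmem (Icc_subset_Icc hx.1 le_rfl))).mono Ioi_subset_Ici_self
      have hFd : HasDerivWithinAt (fun u => ∫ τ in a..u, f τ) (f x) (Ici x) x :=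
        intervalIntegral.integral_hasDerivWithinAt_right h1 hmeas' hcw
      refine hFd.congr_of_eventuallyEq ?_ (he x ⟨hx.1, lt_of_lt_of_le hx.2 (le_of_lt hv.2)⟩)
      exact Filter.eventuallyEq_of_mem hmem fun u hu =>
        he u ⟨hx.1.trans hu.1, lt_of_le_of_lt hu.2 hv.2⟩
    have ha0 : ‖e a‖ ≤ 0 := by
      rw [he a ⟨le_rfl, hab⟩, intervalIntegral.integral_same]; simp
    have hbound : ∀ x ∈ Ico a v, ‖f x‖ ≤ Smax * ‖e x‖ + κ := fun x _ =>
      (norm_add_le _ _).trans (add_le_add (hA _) (hg _))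
    intro u hu
    have := norm_le_gronwallBound_of_norm_deriv_right_le hecont hderiv ha0 hbound u hu
    rw [gronwallBound_of_K_ne_0 hSmax.ne'] at this
    simpa using this
  -- integrability holds on all of [a, b)
  have step2 : ∀ v ∈ Ico a b, IntervalIntegrable f volume a v := by
    by_contra hcon
    push_neg at hcon
    obtain ⟨v₀, hv₀, hv₀n⟩ := hcon
    set N : Set ℝ := {u | u ∈ Ico a b ∧ ¬IntervalIntegrable f volume a u} with hN
    have hNne : N.Nonempty := ⟨v₀, hv₀, hv₀n⟩
    have hbdd : BddBelow N := ⟨a, fun u hu => hu.1.1⟩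
    set β := sInf N with hβ
    have haβ : a ≤ β := le_csInf hNne fun u hu => hu.1.1
    have hβb : β < b := lt_of_le_of_lt (csInf_le hbdd ⟨hv₀, hv₀n⟩) hv₀.2
    have hint_below : ∀ u, a ≤ u → u < β → IntervalIntegrable f volume a u := by
      intro u hau huβ
      by_contra h
      exact absurd (csInf_le hbdd ⟨⟨hau, huβ.trans hβb⟩, h⟩) (not_le.2 huβ)
    have hecont : ContinuousOn e (Ico a β) := by
      intro u hu
      have huv : u < (u + β) / 2 := by linarith [hu.2]
      have hvβ : (u + β) / 2 < β := by linarith [hu.2]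
      have hav : a ≤ (u + β) / 2 := hu.1.trans huv.le
      have hcv : ContinuousOn e (Icc a ((u + β) / 2)) :=
        hcont _ ⟨hav, hvβ.trans hβb⟩ (hint_below _ hav hvβ)
      refine (hcv u ⟨hu.1, huv.le⟩).mono_of_mem_nhdsWithin ?_
      exact mem_nhdsWithin.2 ⟨Iio ((u + β) / 2), isOpen_Iio, huv,
        fun y hy => ⟨hy.2.1, hy.1.le⟩⟩
    have hfcontβ : ContinuousOn f (Ico a β) :=
      (A.continuous.comp_continuousOn hecont).add hgcont.continuousOn
    have hbound : ∀ u ∈ Ico a β, ‖f u‖ ≤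
        Smax * (κ / Smax * (Real.exp (Smax * (b - a)) - 1)) + κ := by
      intro u hu
      have huv : u < (u + β) / 2 := by linarith [hu.2]
      have hvβ : (u + β) / 2 < β := by linarith [hu.2]
      have hav : a ≤ (u + β) / 2 := hu.1.trans huv.le
      have h1 : ‖e u‖ ≤ κ / Smax * (Real.exp (Smax * (u - a)) - 1) :=
        step1 _ ⟨hav, hvβ.trans hβb⟩ (hint_below _ hav hvβ) u ⟨hu.1, huv.le⟩
      have h2 : ‖e u‖ ≤ κ / Smax * (Real.exp (Smax * (b - a)) - 1) := by
        refine h1.trans (mul_le_mul_of_nonneg_left ?_ (by positivity))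
        have : u - a ≤ b - a := by have := hu.2.trans hβb; linarith
        have := Real.exp_le_exp.2 (mul_le_mul_of_nonneg_left this hSmax.le)
        linarith
      calc ‖f u‖ ≤ Smax * ‖e u‖ + κ :=
            (norm_add_le _ _).trans (add_le_add (hA _) (hg _))
        _ ≤ _ := by
            have := mul_le_mul_of_nonneg_left h2 hSmax.le
            linarith
    have hintβ : IntervalIntegrable f volume a β := by
      rw [intervalIntegrable_iff_integrableOn_Ioc_of_le haβ,
        integrableOn_Ioc_iff_integrableOn_Ioo]
      refine ⟨(hfcontβ.mono Ioo_subset_Ico_self).aestronglyMeasurable measurableSet_Ioo, ?_⟩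
      refine HasFiniteIntegral.restrict_of_bounded (C :=
        Smax * (κ / Smax * (Real.exp (Smax * (b - a)) - 1)) + κ) measure_Ioo_lt_top ?_
      exact (ae_restrict_iff' measurableSet_Ioo).2 (Filter.Eventually.of_forall
        fun y hy => hbound y (Ioo_subset_Ico_self hy))
    have hzero : ∀ u ∈ Ioo β b, e u = 0 := by
      intro u hu
      have hau : a ≤ u := haβ.trans hu.1.le
      have huN : ¬IntervalIntegrable f volume a u := by
        intro hint
        have hle : u ≤ β := le_csInf hNne fun w hw => by
          by_contra hlt
          push_neg at hlt
          exact hw.2 (hint.mono_set (by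
            rw [uIcc_of_le hw.1.1, uIcc_of_le hau]
            exact Icc_subset_Icc le_rfl hlt.le))
        exact absurd hu.1 (not_lt.2 hle)
      rw [he u ⟨hau, hu.2⟩, intervalIntegral.integral_of_le hau]
      refine MeasureTheory.integral_undef ?_
      rwa [intervalIntegrable_iff_integrableOn_Ioc_of_le hau] at huN
    set w := (β + b) / 2 with hw
    have hβw : β < w := by rw [hw]; linarith
    have hwb : w < b := by rw [hw]; linarith
    have hwN : w ∈ N := by
      obtain ⟨u, huN, hu_lt⟩ := exists_lt_of_csInf_lt hNne hβw
      refine ⟨⟨haβ.trans hβw.le, hwb⟩, fun hint => huN.2 (hint.mono_set ?_)⟩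
      rw [uIcc_of_le huN.1.1, uIcc_of_le (haβ.trans hβw.le)]
      exact Icc_subset_Icc le_rfl hu_lt.le
    have hfw : IntervalIntegrable f volume β w := by
      rw [intervalIntegrable_iff_integrableOn_Ioc_of_le hβw.le]
      have heq : EqOn g f (Ioc β w) := fun y hy => by
        have h0 : e y = 0 := hzero y ⟨hy.1, lt_of_le_of_lt hy.2 hwb⟩
        simp [hf, h0]
      exact ((hgcont.integrableOn_Icc).mono_set Ioc_subset_Icc_self).congr_fun heq
        measurableSet_Ioc
    exact hwN.2 (hintβ.trans hfw)
  intro u hu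
  exact step1 u hu (step2 u hu) u ⟨hu.1, le_rfl⟩

/-- Global version of Theorem 1: with resets to zero at each service time and all
dwell times satisfying the maximum dwell-time condition, the observer error stays
within the tolerance `V_T` for all time. -/
theorem observer_error_global_bound {m : ℕ}
    (A : EuclideanSpace ℝ (Fin m) →L[ℝ] EuclideanSpace ℝ (Fin m))
    (Smax : ℝ) (hSmax : 0 < Smax) (hA : ∀ v, ‖A v‖ ≤ Smax * ‖v‖)
    (g : ℝ → EuclideanSpace ℝ (Fin m)) (hgcont : Continuous g)
    (κ : ℝ) (hκ : 0 < κ) (hg : ∀ τ, ‖g τ‖ ≤ κ)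
    (ts : ℕ → ℝ) (hts0 : ts 0 = 0) (htsmono : StrictMono ts)
    (htsinf : Filter.Tendsto ts Filter.atTop Filter.atTop)
    (e : ℝ → EuclideanSpace ℝ (Fin m))
    (he : ∀ s : ℕ, ∀ u ∈ Ico (ts s) (ts (s + 1)),
      e u = ∫ τ in (ts s)..u, (A (e τ) + g τ))
    (V_T : ℝ) (hVT : 0 < V_T)
    (hdwell : ∀ s : ℕ, ts (s + 1) - ts s ≤ 1 / Smax * Real.log (V_T * Smax / κ + 1)) :
    ∀ t, 0 ≤ t → ‖e t‖ ≤ V_T := by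
  intro t ht
  classical
  have hP : ∃ n, t < ts n := by
    obtain ⟨n, hn⟩ := (Filter.tendsto_atTop.1 htsinf (t + 1)).exists
    exact ⟨n, by linarith⟩
  have hn₀ : t < ts (Nat.find hP) := Nat.find_spec hP
  have hn₀ne : Nat.find hP ≠ 0 := by
    intro h
    rw [h, hts0] at hn₀; linarith
  obtain ⟨s, hs⟩ := Nat.exists_eq_succ_of_ne_zero hn₀ne
  have hts_le : ts s ≤ t := by
    have := Nat.find_min hP (m := s) (by omega)
    push_neg at this
    exact this
  have ht_lt : t < ts (s + 1) := by rw [show s + 1 = Nat.find hP by omega]; exact hn₀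
  have hab : ts s < ts (s + 1) := htsmono (Nat.lt_succ_self s)
  have key := interval_gronwall A Smax hSmax hA g hgcont κ hκ hg e hab (he s) t
    ⟨hts_le, ht_lt⟩
  have h1 : Smax * (t - ts s) ≤ Real.log (V_T * Smax / κ + 1) := by
    have hd := hdwell s
    have : t - ts s ≤ 1 / Smax * Real.log (V_T * Smax / κ + 1) := by linarith
    have := mul_le_mul_of_nonneg_left this hSmax.le
    rwa [show Smax * (1 / Smax * Real.log (V_T * Smax / κ + 1))
        = Real.log (V_T * Smax / κ + 1) by field_simp] at this
  have h2 : Real.exp (Smax * (t - ts s)) ≤ V_T * Smax / κ + 1 := by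
    calc Real.exp (Smax * (t - ts s)) ≤ Real.exp (Real.log (V_T * Smax / κ + 1)) :=
          Real.exp_le_exp.2 h1
      _ = V_T * Smax / κ + 1 := Real.exp_log (by positivity)
  calc ‖e t‖ ≤ κ / Smax * (Real.exp (Smax * (t - ts s)) - 1) := key
    _ ≤ κ / Smax * (V_T * Smax / κ) := by
        apply mul_le_mul_of_nonneg_left (by linarith) (by positivity)
    _ = V_T := by field_simp
end
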